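/- (Derivative identity for the a posteriori covariance) Let A, C, W be real n×n matrices with W symmetric positive definite, and let σ₀ > 0. Suppose Σ : ℝ → ℝ^{n×n} is differentiable at σ₀, takes symmetric positive definite values, and satisfies, for all s in a neighborhood of σ₀, the parameterized Riccati equation Σ(s) = A Σ(s) Aᵀ − A Σ(s) Cᵀ (C Σ(s) Cᵀ + s²·I)⁻¹ C Σ(s) Aᵀ + W, and define Σ̄(s) := Σ(s) − Σ(s) Cᵀ (C Σ(s) Cᵀ + s²·I)⁻¹ C Σ(s). Writing V := σ₀²·I, Σ := Σ(σ₀), P̄ := Cᵀ(C Σ Cᵀ + V)⁻¹ C Σ, F̄ := (C Σ Cᵀ + V)⁻¹ C Σ, and Ū := (I − P̄)(I − P̄ᵀ), the function s ↦ tr(Σ̄(s)) is differentiable at σ₀ with derivative tr( Σ'(σ₀) · Ū ) + 2σ₀ · tr( F̄ᵀ F̄ ). -/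

import Mathlib

open Matrix

variable {n : ℕ}

def HasMDerivAt (f : ℝ → Matrix (Fin n) (Fin n) ℝ) (f' : Matrix (Fin n) (Fin n) ℝ) (x : ℝ) : Prop :=
  ∀ i j, HasDerivAt (fun s => f s i j) (f' i j) x

lemma HasMDerivAt.mul {f g : ℝ → Matrix (Fin n) (Fin n) ℝ} {f' g' x}
    (hf : HasMDerivAt f f' x) (hg : HasMDerivAt g g' x) :
    HasMDerivAt (fun s => f s * g s) (f' * g x + f x * g') x := by
  intro i j
  have h : ∀ s, (f s * g s) i j = ∑ k, f s i k * g s k j := fun s => Matrix.mul_apply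
  simp only [h]
  have := HasDerivAt.fun_sum (fun k (_ : k ∈ Finset.univ) => (hf i k).fun_mul (hg k j))
  refine this.congr_deriv ?_
  simp [Matrix.mul_apply, Matrix.add_apply, Finset.sum_add_distrib]

lemma differentiableAt_det_comp {f : ℝ → Matrix (Fin n) (Fin n) ℝ} {x : ℝ}
    (hf : ∀ i j, DifferentiableAt ℝ (fun s => f s i j) x) :
    DifferentiableAt ℝ (fun s => (f s).det) x := by
  simp only [Matrix.det_apply]
  apply DifferentiableAt.fun_sum
  intro σ _
  simp only [Units.smul_def, zsmul_eq_mul]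
  exact (differentiableAt_const _).mul (DifferentiableAt.fun_finsetProd (fun i _ => hf (σ i) i))

lemma differentiableAt_inv_entry {f : ℝ → Matrix (Fin n) (Fin n) ℝ} {x : ℝ}
    (hf : ∀ i j, DifferentiableAt ℝ (fun s => f s i j) x)
    (hdet : (f x).det ≠ 0) (i j : Fin n) :
    DifferentiableAt ℝ (fun s => (f s)⁻¹ i j) x := by
  have heq : (fun s => (f s)⁻¹ i j) = fun s => ((f s).det)⁻¹ * (f s).adjugate i j := by
    funext s
    rw [Matrix.inv_def, Matrix.smul_apply, Ring.inverse_eq_inv, smul_eq_mul]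
  rw [heq]
  refine ((differentiableAt_det_comp hf).inv hdet).mul ?_
  have : (fun s => (f s).adjugate i j) = fun s => ((f s).updateRow j (Pi.single i 1)).det := by
    funext s; rw [Matrix.adjugate_apply]
  rw [this]
  apply differentiableAt_det_comp
  intro k l
  by_cases hk : k = j <;> simp [Matrix.updateRow_apply, hk, hf k l]

lemma HasMDerivAt.matrix_inv {f : ℝ → Matrix (Fin n) (Fin n) ℝ} {f' : Matrix (Fin n) (Fin n) ℝ} {x : ℝ}
    (hf : HasMDerivAt f f' x) (hdet : (f x).det ≠ 0) :
    HasMDerivAt (fun s => (f s)⁻¹) (-((f x)⁻¹ * f' * (f x)⁻¹)) x := by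
  have hde : ∀ i j, DifferentiableAt ℝ (fun s => f s i j) x := fun i j => (hf i j).differentiableAt
  have hNd : ∀ i j, DifferentiableAt ℝ (fun s => (f s)⁻¹ i j) x :=
    differentiableAt_inv_entry hde hdet
  set g : Matrix (Fin n) (Fin n) ℝ := Matrix.of fun i j => deriv (fun s => (f s)⁻¹ i j) x with hgdef
  have hN : HasMDerivAt (fun s => (f s)⁻¹) g x := fun i j => (hNd i j).hasDerivAt
  have hcont : ContinuousAt (fun s => (f s).det) x := (differentiableAt_det_comp hde).continuousAt
  have hev : ∀ᶠ s in nhds x, (f s).det ≠ 0 := hcont.eventually_ne hdet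
  have hprod : (fun s => f s * (f s)⁻¹) =ᶠ[nhds x] (fun _ => (1 : Matrix (Fin n) (Fin n) ℝ)) :=
    hev.mono fun s hs => Matrix.mul_nonsing_inv _ (isUnit_iff_ne_zero.mpr hs)
  have h1 : HasMDerivAt (fun s => f s * (f s)⁻¹) (f' * (f x)⁻¹ + f x * g) x := hf.mul hN
  have hz : f' * (f x)⁻¹ + f x * g = 0 := by
    ext i j
    have h2 : HasDerivAt (fun s => (f s * (f s)⁻¹) i j) 0 x := by
      have hc : HasDerivAt (fun _ : ℝ => (1 : Matrix (Fin n) (Fin n) ℝ) i j) 0 x :=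
        hasDerivAt_const _ _
      exact hc.congr_of_eventuallyEq (hprod.mono fun s hs => by simp only []; rw [show f s * (f s)⁻¹ = 1 from hs])
    have := (h1 i j).unique h2
    simpa using this
  have hg : g = -((f x)⁻¹ * f' * (f x)⁻¹) := by
    have hu : IsUnit (f x).det := isUnit_iff_ne_zero.mpr hdet
    have h3 : f x * g = -(f' * (f x)⁻¹) := by
      have := hz
      rw [add_comm] at this
      linear_combination (norm := noncomm_ring) this
    calc g = (f x)⁻¹ * (f x * g) := by rw [← mul_assoc, Matrix.nonsing_inv_mul _ hu, one_mul]
    _ = -((f x)⁻¹ * f' * (f x)⁻¹) := by rw [h3]; noncomm_ring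
  rwa [hg] at hN

lemma hasMDerivAt_const' (A : Matrix (Fin n) (Fin n) ℝ) (x : ℝ) :
    HasMDerivAt (fun _ => A) 0 x := fun i j => by
  simpa using hasDerivAt_const x (A i j)

lemma HasMDerivAt.mul_const {f : ℝ → Matrix (Fin n) (Fin n) ℝ} {f' x}
    (hf : HasMDerivAt f f' x) (A : Matrix (Fin n) (Fin n) ℝ) :
    HasMDerivAt (fun s => f s * A) (f' * A) x := by
  have := hf.mul (hasMDerivAt_const' A x)
  simpa using this

lemma HasMDerivAt.const_mul (A : Matrix (Fin n) (Fin n) ℝ) {f : ℝ → Matrix (Fin n) (Fin n) ℝ} {f' x}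
    (hf : HasMDerivAt f f' x) :
    HasMDerivAt (fun s => A * f s) (A * f') x := by
  have := (hasMDerivAt_const' A x).mul hf
  simpa using this

lemma HasMDerivAt.add {f g : ℝ → Matrix (Fin n) (Fin n) ℝ} {f' g' x}
    (hf : HasMDerivAt f f' x) (hg : HasMDerivAt g g' x) :
    HasMDerivAt (fun s => f s + g s) (f' + g') x := fun i j => by
  simpa [Matrix.add_apply] using (hf i j).fun_add (hg i j)

lemma HasMDerivAt.sub {f g : ℝ → Matrix (Fin n) (Fin n) ℝ} {f' g' x}
    (hf : HasMDerivAt f f' x) (hg : HasMDerivAt g g' x) :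
    HasMDerivAt (fun s => f s - g s) (f' - g') x := fun i j => by
  simpa [Matrix.sub_apply] using (hf i j).fun_sub (hg i j)

lemma HasMDerivAt.traceD {f : ℝ → Matrix (Fin n) (Fin n) ℝ} {f' x}
    (hf : HasMDerivAt f f' x) :
    HasDerivAt (fun s => (f s).trace) f'.trace x := by
  simp only [Matrix.trace, Matrix.diag]
  exact HasDerivAt.fun_sum (fun i _ => hf i i)

lemma hasMDerivAt_sq_smul_one (x : ℝ) :
    HasMDerivAt (fun s : ℝ => s ^ 2 • (1 : Matrix (Fin n) (Fin n) ℝ))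
      ((2 * x) • (1 : Matrix (Fin n) (Fin n) ℝ)) x := by
  intro i j
  simp only [Matrix.smul_apply, smul_eq_mul]
  simpa [mul_comm] using (hasDerivAt_pow 2 x).mul_const ((1 : Matrix (Fin n) (Fin n) ℝ) i j)


/-- Derivative identity for the a posteriori covariance: if `S(s)` solves the
privacy-parameterized Riccati equation near `σ₀` and is (entrywise)
differentiable at `σ₀` with derivative `S'`, then `s ↦ tr(S̄(s))` is
differentiable at `σ₀` with derivative `tr(S'·Ū) + 2σ₀·tr(F̄ᵀF̄)`, where
`S̄(s) = S(s) − S(s)Cᵀ(C S(s) Cᵀ + s²I)⁻¹ C S(s)`, `P̄ = Cᵀ(C S Cᵀ + V)⁻¹ C S`,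
`F̄ = (C S Cᵀ + V)⁻¹ C S`, `Ū = (I − P̄)(I − P̄ᵀ)`, and `V = σ₀² I`. -/
theorem riccati_posterior_derivative_identity {n : ℕ}
    (A C W : Matrix (Fin n) (Fin n) ℝ) (hW : W.PosDef) (σ₀ : ℝ) (hσ₀ : 0 < σ₀)
    (S : ℝ → Matrix (Fin n) (Fin n) ℝ) (S' : Matrix (Fin n) (Fin n) ℝ)
    (hderiv : ∀ i j, HasDerivAt (fun s => S s i j) (S' i j) σ₀)
    (hpos : ∀ s, (S s).PosDef)
    (hric : ∀ᶠ s in nhds σ₀, S s = A * S s * Aᵀ -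
        A * S s * Cᵀ * (C * S s * Cᵀ + s ^ 2 • (1 : Matrix (Fin n) (Fin n) ℝ))⁻¹ *
          C * S s * Aᵀ + W) :
    HasDerivAt (fun s => (S s - S s * Cᵀ * (C * S s * Cᵀ + s ^ 2 • (1 : Matrix (Fin n) (Fin n) ℝ))⁻¹ * C * S s).trace)
      ((S' * ((1 - (Cᵀ * (C * S σ₀ * Cᵀ + σ₀ ^ 2 • (1 : Matrix (Fin n) (Fin n) ℝ))⁻¹ * C * S σ₀)) * (1 - (Cᵀ * (C * S σ₀ * Cᵀ + σ₀ ^ 2 • (1 : Matrix (Fin n) (Fin n) ℝ))⁻¹ * C * S σ₀)ᵀ))).trace +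
        2 * σ₀ * ((((C * S σ₀ * Cᵀ + σ₀ ^ 2 • (1 : Matrix (Fin n) (Fin n) ℝ))⁻¹ * C * S σ₀)ᵀ * ((C * S σ₀ * Cᵀ + σ₀ ^ 2 • (1 : Matrix (Fin n) (Fin n) ℝ))⁻¹ * C * S σ₀)).trace)) σ₀ := by
  have hS : HasMDerivAt S S' σ₀ := hderiv
  set S0 := S σ₀ with hS0def
  -- the measurement matrix M
  have hM : HasMDerivAt (fun s => C * S s * Cᵀ + s ^ 2 • (1 : Matrix (Fin n) (Fin n) ℝ))
      (C * S' * Cᵀ + (2 * σ₀) • (1 : Matrix (Fin n) (Fin n) ℝ)) σ₀ :=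
    (((hS.const_mul C).mul_const Cᵀ)).add (hasMDerivAt_sq_smul_one σ₀)
  set M0 : Matrix (Fin n) (Fin n) ℝ := C * S0 * Cᵀ + σ₀ ^ 2 • (1 : Matrix (Fin n) (Fin n) ℝ) with hM0def
  -- M0 is positive definite
  have hV : (σ₀ ^ 2 • (1 : Matrix (Fin n) (Fin n) ℝ)).PosDef := by
    constructor
    · simp [Matrix.IsHermitian, Matrix.conjTranspose_smul]
    · intro x hx
      exact (Matrix.PosDef.one.smul (pow_pos hσ₀ 2)).2 hx
  have hCSC : (C * S0 * Cᵀ).PosSemidef := by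
    have := (hpos σ₀).posSemidef.mul_mul_conjTranspose_same C
    simpa [Matrix.conjTranspose_eq_transpose_of_trivial] using this
  have hM0 : M0.PosDef := Matrix.PosDef.posSemidef_add hCSC hV
  have hdet : M0.det ≠ 0 := hM0.det_pos.ne'
  set N : Matrix (Fin n) (Fin n) ℝ := M0⁻¹ with hNdef
  have hNder : HasMDerivAt (fun s => (C * S s * Cᵀ + s ^ 2 • (1 : Matrix (Fin n) (Fin n) ℝ))⁻¹)
      (-(N * (C * S' * Cᵀ + (2 * σ₀) • (1 : Matrix (Fin n) (Fin n) ℝ)) * N)) σ₀ := by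
    exact hM.matrix_inv (show ((fun s => C * S s * Cᵀ + s ^ 2 • (1 : Matrix (Fin n) (Fin n) ℝ)) σ₀).det ≠ 0 from hdet)
  set N' : Matrix (Fin n) (Fin n) ℝ :=
    -(N * (C * S' * Cᵀ + (2 * σ₀) • (1 : Matrix (Fin n) (Fin n) ℝ)) * N) with hN'def
  -- derivative of the inner matrix function
  have hinner : HasMDerivAt
      (fun s => S s - S s * Cᵀ * (C * S s * Cᵀ + s ^ 2 • (1 : Matrix (Fin n) (Fin n) ℝ))⁻¹ * C * S s)
      (S' - (((S' * Cᵀ * N + S0 * Cᵀ * N') * C) * S0 + (S0 * Cᵀ * N * C) * S')) σ₀ := by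
    have h1 : HasMDerivAt (fun s => S s * Cᵀ) (S' * Cᵀ) σ₀ := hS.mul_const Cᵀ
    have h2 : HasMDerivAt (fun s => S s * Cᵀ * (C * S s * Cᵀ + s ^ 2 • (1 : Matrix (Fin n) (Fin n) ℝ))⁻¹)
        (S' * Cᵀ * N + S0 * Cᵀ * N') σ₀ := by
      exact h1.mul hNder
    have h3 := (h2.mul_const C).mul hS
    exact hS.sub (by simpa using h3)
  have htr := hinner.traceD
  convert htr using 1
  have hS0t : S0ᵀ = S0 := by
    have h := (hpos σ₀).isHermitian
    rwa [Matrix.IsHermitian, Matrix.conjTranspose_eq_transpose_of_trivial] at h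
  have hM0t : M0ᵀ = M0 := by
    have h := hM0.isHermitian
    rwa [Matrix.IsHermitian, Matrix.conjTranspose_eq_transpose_of_trivial] at h
  have hNt : Nᵀ = N := by rw [hNdef, Matrix.transpose_nonsing_inv, hM0t]
  have hPt : (Cᵀ * N * C * S0)ᵀ = S0 * (Cᵀ * (N * C)) := by
    simp [Matrix.transpose_mul, hS0t, hNt, Matrix.mul_assoc]
  have hFt : (N * C * S0)ᵀ = S0 * (Cᵀ * N) := by
    simp [Matrix.transpose_mul, hS0t, hNt, Matrix.mul_assoc]
  rw [hPt, hFt, hN'def,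
    show (1 - Cᵀ * N * C * S0) * (1 - S0 * (Cᵀ * (N * C)))
      = 1 - S0 * (Cᵀ * (N * C)) - Cᵀ * N * C * S0
        + Cᵀ * N * C * S0 * (S0 * (Cᵀ * (N * C))) from by noncomm_ring]
  simp only [Matrix.mul_sub, Matrix.mul_add, Matrix.sub_mul, Matrix.add_mul, Matrix.mul_one,
    Matrix.one_mul, Matrix.neg_mul, Matrix.mul_neg, Matrix.trace_sub, Matrix.trace_add,
    Matrix.trace_neg, mul_smul_comm, smul_mul_assoc, Matrix.trace_smul, smul_eq_mul,
    Matrix.mul_assoc]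
  have c2 : (S' * (S0 * (Cᵀ * (N * C)))).trace = (S0 * (Cᵀ * (N * (C * S')))).trace := by
    rw [Matrix.trace_mul_comm]
    simp [Matrix.mul_assoc]
  have c4 : (S' * (Cᵀ * (N * (C * (S0 * (S0 * (Cᵀ * (N * C)))))))).trace
      = (S0 * (Cᵀ * (N * (C * (S' * (Cᵀ * (N * (C * S0)))))))).trace := by
    rw [show S' * (Cᵀ * (N * (C * (S0 * (S0 * (Cᵀ * (N * C)))))))
        = (S' * (Cᵀ * (N * (C * S0)))) * (S0 * (Cᵀ * (N * C))) from by noncomm_ring,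
      Matrix.trace_mul_comm]
    simp [Matrix.mul_assoc]
  linarith [c2, c4]
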